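/- For a > 1/2, the series Σ_{k=1}^∞ e^{i√k} k^{-a} converges. -/

import Mathlib

open Filter MeasureTheory Set intervalIntegral

noncomputable def ff (a : ℝ) (x : ℝ) : ℂ :=
  Complex.exp (Complex.I * Real.sqrt x) * ((x ^ (-a) : ℝ) : ℂ)

noncomputable def ff' (a : ℝ) (x : ℝ) : ℂ :=
  Complex.exp (Complex.I * Real.sqrt x) *
    (Complex.I * ((1 / (2 * Real.sqrt x) * x ^ (-a) : ℝ) : ℂ)
      + (((-a) * x ^ (-a - 1) : ℝ) : ℂ))

lemma expI_norm (t : ℝ) : ‖Complex.exp (Complex.I * (t : ℂ))‖ = 1 := by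
  rw [Complex.norm_exp]
  simp [Complex.mul_re]

lemma hasDerivAt_expI {x : ℝ} (hx : 0 < x) :
    HasDerivAt (fun y : ℝ => Complex.exp (Complex.I * (Real.sqrt y : ℂ)))
      (Complex.exp (Complex.I * (Real.sqrt x : ℂ)) *
        (Complex.I * ((1 / (2 * Real.sqrt x) : ℝ) : ℂ))) x := by
  have h1 : HasDerivAt (fun y : ℝ => ((Real.sqrt y : ℝ) : ℂ))
      ((1 / (2 * Real.sqrt x) : ℝ) : ℂ) x :=
    (Real.hasDerivAt_sqrt hx.ne').ofReal_comp
  exact (h1.const_mul Complex.I).cexp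

lemma hasDerivAt_ff (a : ℝ) {x : ℝ} (hx : 0 < x) :
    HasDerivAt (ff a) (ff' a x) x := by
  have h2 : HasDerivAt (fun y : ℝ => ((y ^ (-a) : ℝ) : ℂ))
      ((((-a) * x ^ (-a - 1)) : ℝ) : ℂ) x := by
    have := (Real.hasDerivAt_rpow_const (p := -a) (Or.inl hx.ne')).ofReal_comp
    simpa [mul_comm] using this
  have h := (hasDerivAt_expI hx).mul h2
  refine h.congr_deriv ?_
  unfold ff'
  push_cast
  ring

lemma norm_ff'_le (a : ℝ) (ha : 1 / 2 < a) {x : ℝ} (hx : 1 ≤ x) :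
    ‖ff' a x‖ ≤ (1 / 2 + a) * x ^ (-(a + 1 / 2)) := by
  have hx0 : 0 < x := lt_of_lt_of_le one_pos hx
  have hs : Real.sqrt x = x ^ (1/2 : ℝ) := Real.sqrt_eq_rpow x
  have hsne : x ^ ((1:ℝ)/2) ≠ 0 := by positivity
  have key1 : 1 / (2 * Real.sqrt x) * x ^ (-a) = (1/2) * x ^ (-(a + 1/2)) := by
    have e1 : x ^ (-(a + 1/2)) = x ^ (-a) * x ^ (-(1/2) : ℝ) := by
      rw [← Real.rpow_add hx0]; ring_nf
    rw [hs, e1, Real.rpow_neg hx0.le ((1:ℝ)/2)]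
    field_simp
  have key2 : x ^ (-a - 1) ≤ x ^ (-(a + 1/2)) :=
    Real.rpow_le_rpow_of_exponent_le hx (by linarith)
  have hpos2 : (0:ℝ) ≤ x ^ (-(a+1/2)) := Real.rpow_nonneg hx0.le _
  calc ‖ff' a x‖ = ‖Complex.I * ((1 / (2 * Real.sqrt x) * x ^ (-a) : ℝ) : ℂ)
        + (((-a) * x ^ (-a - 1) : ℝ) : ℂ)‖ := by
        rw [ff', norm_mul, expI_norm, one_mul]
    _ ≤ ‖Complex.I * ((1 / (2 * Real.sqrt x) * x ^ (-a) : ℝ) : ℂ)‖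
        + ‖(((-a) * x ^ (-a - 1) : ℝ) : ℂ)‖ := norm_add_le _ _
    _ = |1 / (2 * Real.sqrt x) * x ^ (-a)| + |(-a) * x ^ (-a - 1)| := by
        rw [norm_mul, Complex.norm_I, one_mul, Complex.norm_real, Complex.norm_real]
        rfl
    _ ≤ (1/2) * x ^ (-(a + 1/2)) + a * x ^ (-(a + 1/2)) := by
        rw [key1]
        gcongr
        · rw [abs_of_nonneg (by positivity)]
        · rw [abs_mul, abs_neg, abs_of_nonneg (by linarith : (0:ℝ) ≤ a),
            abs_of_nonneg (Real.rpow_nonneg hx0.le _)]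
          exact mul_le_mul_of_nonneg_left key2 (by linarith)
    _ = (1 / 2 + a) * x ^ (-(a + 1/2)) := by ring

noncomputable def uu (a : ℝ) (x : ℝ) : ℂ := ((x ^ (1/2 - a) : ℝ) : ℂ)
noncomputable def vv (x : ℝ) : ℂ := Complex.exp (Complex.I * (Real.sqrt x : ℂ))
noncomputable def uu' (a : ℝ) (x : ℝ) : ℂ := (((1/2 - a) * x ^ ((1/2 - a) - 1) : ℝ) : ℂ)
noncomputable def vv' (x : ℝ) : ℂ :=
  Complex.exp (Complex.I * (Real.sqrt x : ℂ)) * (Complex.I * ((1 / (2 * Real.sqrt x) : ℝ) : ℂ))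

lemma hasDerivAt_uu (a : ℝ) {x : ℝ} (hx : 0 < x) : HasDerivAt (uu a) (uu' a x) x := by
  have := (Real.hasDerivAt_rpow_const (p := 1/2 - a) (Or.inl hx.ne')).ofReal_comp
  unfold uu uu'
  simpa [mul_comm] using this

lemma hasDerivAt_vv {x : ℝ} (hx : 0 < x) : HasDerivAt vv (vv' x) x := hasDerivAt_expI hx

lemma continuous_vv : Continuous vv :=
  Complex.continuous_exp.comp (continuous_const.mul
    (Complex.continuous_ofReal.comp Real.continuous_sqrt))

lemma continuousOn_rpowC (p : ℝ) :
    ContinuousOn (fun x : ℝ => ((x ^ p : ℝ) : ℂ)) {x : ℝ | 0 < x} :=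
  Complex.continuous_ofReal.comp_continuousOn
    (fun x hx => (Real.continuousAt_rpow_const x p (Or.inl (ne_of_gt hx))).continuousWithinAt)

lemma continuousOn_ff (a : ℝ) : ContinuousOn (ff a) {x : ℝ | 0 < x} :=
  (continuous_vv.continuousOn).mul (continuousOn_rpowC (-a))

lemma uIcc_subset_pos {c d : ℝ} (hc : 0 < c) (hd : 0 < d) :
    Set.uIcc c d ⊆ {x : ℝ | 0 < x} := by
  intro x hx
  have := hx.1
  simp only [Set.mem_setOf_eq]
  exact lt_of_lt_of_le (lt_min hc hd) this

lemma intervalIntegrable_ff (a : ℝ) {c d : ℝ} (hc : 0 < c) (hd : 0 < d) :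
    IntervalIntegrable (ff a) volume c d :=
  ((continuousOn_ff a).mono (uIcc_subset_pos hc hd)).intervalIntegrable

lemma continuousOn_uu' (a : ℝ) : ContinuousOn (uu' a) {x : ℝ | 0 < x} :=
  Complex.continuous_ofReal.comp_continuousOn
    (continuousOn_const.mul
      (fun x hx => (Real.continuousAt_rpow_const x _ (Or.inl (ne_of_gt hx))).continuousWithinAt))

lemma ff_eq (a : ℝ) {x : ℝ} (hx : 0 < x) :
    ff a x = (-2 * Complex.I) * (uu a x * vv' x) := by
  have hs : Real.sqrt x = x ^ (1/2 : ℝ) := Real.sqrt_eq_rpow x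
  have hsne : x ^ ((1:ℝ)/2) ≠ 0 := by positivity
  have hre : x ^ ((1:ℝ)/2 - a) * (1 / (2 * Real.sqrt x)) = x ^ (-a) / 2 := by
    have e1 : x ^ ((1:ℝ)/2 - a) = x ^ (-a) * x ^ ((1:ℝ)/2) := by
      rw [← Real.rpow_add hx]; ring_nf
    rw [hs, e1]
    field_simp
  have hI : (-2 * Complex.I) * Complex.I = 2 := by
    have := Complex.I_mul_I
    linear_combination -2 * this
  symm
  calc (-2 * Complex.I) * (uu a x * vv' x)
      = ((-2 * Complex.I) * Complex.I) *
        (((x ^ ((1:ℝ)/2 - a) : ℝ) : ℂ) * ((1 / (2 * Real.sqrt x) : ℝ) : ℂ)) * vv x := by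
        unfold uu vv vv'; ring
    _ = 2 * ((x ^ ((1:ℝ)/2 - a) * (1 / (2 * Real.sqrt x)) : ℝ) : ℂ) * vv x := by
        rw [hI]; push_cast; ring
    _ = ff a x := by
        rw [hre]; unfold ff vv; push_cast; ring

lemma integral_ff_tendsto (a : ℝ) (ha : 1 / 2 < a) :
    ∃ L : ℂ, Tendsto (fun T : ℝ => ∫ x in (1:ℝ)..T, ff a x) atTop (nhds L) := by
  have hint : IntegrableOn (fun x => uu' a x * vv x) (Set.Ioi (1:ℝ)) volume := by
    have hmaj : IntegrableOn (fun x : ℝ => |1/2 - a| * x ^ ((1/2 - a) - 1)) (Set.Ioi (1:ℝ)) volume :=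
      (integrableOn_Ioi_rpow_of_lt (by linarith) one_pos).const_mul _
    refine Integrable.mono' hmaj ?_ ?_
    · refine ((ContinuousOn.mul ?_ continuous_vv.continuousOn).aestronglyMeasurable measurableSet_Ioi)
      refine (continuousOn_uu' a).mono ?_
      intro x hx; exact lt_trans one_pos (Set.mem_Ioi.mp hx)
    · filter_upwards [ae_restrict_mem measurableSet_Ioi] with x hx
      have hx0 : (0:ℝ) < x := lt_trans one_pos hx
      rw [norm_mul]
      unfold uu' vv
      rw [expI_norm, mul_one, Complex.norm_real, Real.norm_eq_abs, abs_mul,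
        abs_of_nonneg (Real.rpow_nonneg hx0.le _)]
  set I1 : ℂ := ∫ x in Set.Ioi (1:ℝ), uu' a x * vv x
  have htail : Tendsto (fun T : ℝ => ∫ x in (1:ℝ)..T, uu' a x * vv x) atTop (nhds I1) :=
    intervalIntegral_tendsto_integral_Ioi 1 hint tendsto_id
  have hUV : Tendsto (fun T : ℝ => uu a T * vv T) atTop (nhds 0) := by
    rw [tendsto_zero_iff_norm_tendsto_zero]
    have h0 : Tendsto (fun T : ℝ => T ^ (-(a - 1/2))) atTop (nhds 0) :=
      tendsto_rpow_neg_atTop (by linarith)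
    refine Tendsto.congr' ?_ h0
    filter_upwards [eventually_gt_atTop 0] with T hT
    rw [norm_mul]
    unfold uu vv
    rw [expI_norm, mul_one, Complex.norm_real, Real.norm_eq_abs,
      abs_of_nonneg (Real.rpow_nonneg hT.le _)]
    ring_nf
  refine ⟨-2 * Complex.I * (0 - uu a 1 * vv 1 - I1), ?_⟩
  have heq : ∀ᶠ T in atTop, (-2 * Complex.I) *
      (uu a T * vv T - uu a 1 * vv 1 - ∫ x in (1:ℝ)..T, uu' a x * vv x)
      = ∫ x in (1:ℝ)..T, ff a x := by
    filter_upwards [eventually_ge_atTop 1] with T hT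
    have hpos : ∀ x ∈ Set.uIcc (1:ℝ) T, (0:ℝ) < x := fun x hx => uIcc_subset_pos one_pos (lt_of_lt_of_le one_pos hT) hx
    have hu : ∀ x ∈ Set.uIcc (1:ℝ) T, HasDerivAt (uu a) (uu' a x) x :=
      fun x hx => hasDerivAt_uu a (hpos x hx)
    have hv : ∀ x ∈ Set.uIcc (1:ℝ) T, HasDerivAt vv (vv' x) x :=
      fun x hx => hasDerivAt_vv (hpos x hx)
    have hu' : IntervalIntegrable (uu' a) volume 1 T := by
      apply ContinuousOn.intervalIntegrable
      exact (continuousOn_uu' a).mono (uIcc_subset_pos one_pos (lt_of_lt_of_le one_pos hT))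
    have hv' : IntervalIntegrable vv' volume 1 T := by
      apply ContinuousOn.intervalIntegrable
      refine ContinuousOn.mul continuous_vv.continuousOn ?_
      refine ContinuousOn.mul continuousOn_const ?_
      refine Complex.continuous_ofReal.comp_continuousOn ?_
      refine ContinuousOn.div continuousOn_const
        (continuous_const.mul Real.continuous_sqrt).continuousOn ?_
      intro x hx
      have h0 : (0:ℝ) < x := uIcc_subset_pos one_pos (lt_of_lt_of_le one_pos hT) hx
      have h1 : 0 < Real.sqrt x := Real.sqrt_pos.mpr h0
      positivity
    have parts := intervalIntegral.integral_mul_deriv_eq_deriv_mul hu hv hu' hv'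
    have congrInt : ∫ x in (1:ℝ)..T, ff a x
        = ∫ x in (1:ℝ)..T, (-2 * Complex.I) * (uu a x * vv' x) :=
      intervalIntegral.integral_congr (fun x hx => ff_eq a (hpos x hx))
    rw [congrInt, intervalIntegral.integral_const_mul, parts]
  refine Tendsto.congr' heq ?_
  exact Tendsto.const_mul _ (((hUV.sub tendsto_const_nhds).sub htail))

lemma ff_sub_bound (a : ℝ) (ha : 1 / 2 < a) {c x : ℝ} (hc : 1 ≤ c)
    (hx : x ∈ Set.Icc c (c + 1)) :
    ‖ff a x - ff a c‖ ≤ (1 / 2 + a) * c ^ (-(a + 1 / 2)) := by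
  set C := (1 / 2 + a) * c ^ (-(a + 1 / 2)) with hC
  have hc0 : (0:ℝ) < c := lt_of_lt_of_le one_pos hc
  have hder : ∀ y ∈ Set.Icc c (c + 1), HasDerivWithinAt (ff a) (ff' a y) (Set.Icc c (c + 1)) y :=
    fun y hy => (hasDerivAt_ff a (lt_of_lt_of_le hc0 hy.1)).hasDerivWithinAt
  have hbound : ∀ y ∈ Set.Icc c (c + 1), ‖ff' a y‖ ≤ C := by
    intro y hy
    refine (norm_ff'_le a ha (hc.trans hy.1)).trans ?_
    rw [hC]
    exact mul_le_mul_of_nonneg_left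
      (Real.rpow_le_rpow_of_nonpos hc0 hy.1 (by linarith)) (by linarith)
  have key := (convex_Icc c (c + 1)).norm_image_sub_le_of_norm_hasDerivWithin_le hder hbound
    (Set.left_mem_Icc.mpr (by linarith)) hx
  refine key.trans ?_
  have : ‖x - c‖ ≤ 1 := by
    rw [Real.norm_eq_abs, abs_of_nonneg (by linarith [hx.1])]
    linarith [hx.2]
  calc C * ‖x - c‖ ≤ C * 1 := by
        refine mul_le_mul_of_nonneg_left this ?_
        have : (0:ℝ) ≤ c ^ (-(a + 1/2)) := Real.rpow_nonneg hc0.le _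
        rw [hC]; positivity
    _ = C := mul_one C

lemma d_bound (a : ℝ) (ha : 1 / 2 < a) (k : ℕ) :
    ‖ff a ((k:ℝ) + 1) - ∫ x in ((k:ℝ)+1)..((k:ℝ)+2), ff a x‖
      ≤ (1 / 2 + a) * ((k:ℝ) + 1) ^ (-(a + 1 / 2)) := by
  set c : ℝ := (k:ℝ) + 1 with hc
  have hc1 : (1:ℝ) ≤ c := by
    rw [hc]; linarith [Nat.cast_nonneg (α := ℝ) k]
  have hc0 : (0:ℝ) < c := lt_of_lt_of_le one_pos hc1
  have h2 : ((k:ℝ) + 2) = c + 1 := by rw [hc]; ring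
  rw [h2]
  have hint : IntervalIntegrable (ff a) volume c (c + 1) :=
    intervalIntegrable_ff a hc0 (by linarith)
  have hconst : ff a c = ∫ _x in c..(c+1), ff a c := by
    rw [intervalIntegral.integral_const]
    norm_num
  rw [hconst, ← intervalIntegral.integral_sub (intervalIntegrable_const) hint]
  have := intervalIntegral.norm_integral_le_of_norm_le_const
    (C := (1 / 2 + a) * c ^ (-(a + 1 / 2)))
    (f := fun x => ff a c - ff a x) (a := c) (b := c + 1) ?_
  · calc ‖∫ x in c..(c+1), (ff a c - ff a x)‖
        ≤ (1 / 2 + a) * c ^ (-(a + 1 / 2)) * |c + 1 - c| := this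
      _ = (1 / 2 + a) * c ^ (-(a + 1 / 2)) := by norm_num
  · intro x hx
    rw [Set.uIoc_of_le (by linarith : c ≤ c + 1)] at hx
    rw [norm_sub_rev]
    exact ff_sub_bound a ha hc1 ⟨hx.1.le, hx.2⟩

lemma summable_d (a : ℝ) (ha : 1 / 2 < a) :
    Summable (fun k : ℕ => ff a ((k:ℝ) + 1) - ∫ x in ((k:ℝ)+1)..((k:ℝ)+2), ff a x) := by
  refine Summable.of_norm_bounded ?_ (d_bound a ha)
  apply Summable.mul_left
  have h1 : Summable (fun n : ℕ => (n:ℝ) ^ (-(a + 1/2))) :=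
    Real.summable_nat_rpow.mpr (by linarith)
  have h2 := (summable_nat_add_iff 1).mpr h1
  refine h2.congr ?_
  intro k
  push_cast
  ring_nf

theorem stmt19 (a : ℝ) (ha : 1 / 2 < a) :
    ∃ L : ℂ, Tendsto
      (fun N : ℕ => ∑ k ∈ Finset.range N,
        Complex.exp (Complex.I * Real.sqrt (k + 1)) / (((k + 1 : ℝ) ^ a : ℝ) : ℂ))
      atTop (nhds L) := by
  obtain ⟨L1, hL1⟩ := integral_ff_tendsto a ha
  have hs := summable_d a ha
  set L0 : ℂ := ∑' k : ℕ, (ff a ((k:ℝ) + 1) - ∫ x in ((k:ℝ)+1)..((k:ℝ)+2), ff a x) with hL0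
  have h0 : Tendsto (fun N : ℕ => ∑ k ∈ Finset.range N,
      (ff a ((k:ℝ) + 1) - ∫ x in ((k:ℝ)+1)..((k:ℝ)+2), ff a x)) atTop (nhds L0) :=
    hs.hasSum.tendsto_sum_nat
  have h1 : Tendsto (fun N : ℕ => ∫ x in (1:ℝ)..((N:ℝ)+1), ff a x) atTop (nhds L1) :=
    hL1.comp (tendsto_atTop_add_const_right atTop 1 tendsto_natCast_atTop_atTop)
  refine ⟨L0 + L1, ?_⟩
  have key : ∀ N : ℕ, ∑ k ∈ Finset.range N,
      Complex.exp (Complex.I * Real.sqrt (k + 1)) / (((k + 1 : ℝ) ^ a : ℝ) : ℂ)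
      = (∑ k ∈ Finset.range N, (ff a ((k:ℝ) + 1) - ∫ x in ((k:ℝ)+1)..((k:ℝ)+2), ff a x))
        + ∫ x in (1:ℝ)..((N:ℝ)+1), ff a x := by
    intro N
    have hadj : ∑ k ∈ Finset.range N, ∫ x in ((k:ℝ)+1)..((k:ℝ)+2), ff a x
        = ∫ x in (1:ℝ)..((N:ℝ)+1), ff a x := by
      have h := intervalIntegral.sum_integral_adjacent_intervals
        (a := fun k : ℕ => (k:ℝ) + 1) (n := N) (μ := volume) (f := ff a)
        (fun k _ => intervalIntegrable_ff a (by positivity) (by positivity))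
      have e : ∀ k : ℕ, (((k+1:ℕ)):ℝ) + 1 = (k:ℝ) + 2 := by intro k; push_cast; ring
      simp only [e] at h
      simpa using h
    have term_eq : ∀ k : ℕ,
        Complex.exp (Complex.I * Real.sqrt (k + 1)) / (((k + 1 : ℝ) ^ a : ℝ) : ℂ)
        = ff a ((k:ℝ) + 1) := by
      intro k
      unfold ff
      rw [Real.rpow_neg (by positivity), Complex.ofReal_inv, div_eq_mul_inv]
    calc ∑ k ∈ Finset.range N,
          Complex.exp (Complex.I * Real.sqrt (k + 1)) / (((k + 1 : ℝ) ^ a : ℝ) : ℂ)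
        = ∑ k ∈ Finset.range N, ff a ((k:ℝ) + 1) :=
          Finset.sum_congr rfl (fun k _ => term_eq k)
      _ = (∑ k ∈ Finset.range N, (ff a ((k:ℝ) + 1) - ∫ x in ((k:ℝ)+1)..((k:ℝ)+2), ff a x))
          + ∑ k ∈ Finset.range N, ∫ x in ((k:ℝ)+1)..((k:ℝ)+2), ff a x := by
          rw [← Finset.sum_add_distrib]
          exact Finset.sum_congr rfl (fun k _ => by ring)
      _ = _ := by rw [hadj]
  exact (h0.add h1).congr (fun N => (key N).symm)
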